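/- If a graph G on n vertices satisfies: for every subset S, the number of ordered pairs (s,t) ∈ S² with st an edge is within γn² of p|S|² (property P*₂,ₚ(γ)), then for every subset S, the number of labeled (injective homomorphism) copies of K_r in G[S] is within r²γn^r + O_r(n^{r−1}) of p^{C(r,2)}|S|^r. -/
import Mathlib

open Finset

open Finset

section Aux
variable {V : Type} [Fintype V] [DecidableEq V]

noncomputable def indiR (X : Finset V) (a : V) : ℝ := if a ∈ X then 1 else 0

open Classical in
noncomputable def adjiR (G : SimpleGraph V) (a b : V) : ℝ := if G.Adj a b then 1 else 0

lemma indiR_box (X : Finset V) (a : V) : 0 ≤ indiR X a ∧ indiR X a ≤ 1 := by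
  unfold indiR; split <;> norm_num

lemma adjiR_box (G : SimpleGraph V) (a b : V) : 0 ≤ adjiR G a b ∧ adjiR G a b ≤ 1 := by
  unfold adjiR; split <;> norm_num

lemma adjiR_symm (G : SimpleGraph V) (a b : V) : adjiR G a b = adjiR G b a := by
  by_cases h : G.Adj a b
  · simp [adjiR, h, h.symm]
  · have h' : ¬ G.Adj b a := fun hc => h hc.symm
    simp [adjiR, h, h']

lemma box_mul {x y : ℝ} (hx : 0 ≤ x ∧ x ≤ 1) (hy : 0 ≤ y ∧ y ≤ 1) :
    0 ≤ x * y ∧ x * y ≤ 1 :=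
  ⟨mul_nonneg hx.1 hy.1, by nlinarith [hx.1, hx.2, hy.1, hy.2]⟩

lemma box_prod {α : Type*} (s : Finset α) (f : α → ℝ) (h : ∀ x ∈ s, 0 ≤ f x ∧ f x ≤ 1) :
    0 ≤ ∏ x ∈ s, f x ∧ ∏ x ∈ s, f x ≤ 1 :=
  ⟨Finset.prod_nonneg fun x hx => (h x hx).1,
   Finset.prod_le_one (fun x hx => (h x hx).1) (fun x hx => (h x hx).2)⟩

lemma sum_indiR (X : Finset V) : ∑ a, indiR X a = (X.card : ℝ) := by
  unfold indiR
  have h : univ.filter (fun a => a ∈ X) = X := by ext a; simp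
  rw [Finset.sum_boole, h]

lemma sum_indiR_mul (X : Finset V) (f : V → ℝ) :
    ∑ a, indiR X a * f a = ∑ a ∈ X, f a := by
  have h : ∀ a, indiR X a * f a = if a ∈ X then f a else 0 := by
    intro a; by_cases h : a ∈ X <;> simp [indiR, h]
  simp_rw [h]
  rw [Finset.sum_ite_mem, Finset.univ_inter]

lemma box_helper (c : V → ℝ) (K : ℝ)
    (h : ∀ X : Finset V, |∑ a ∈ X, c a| ≤ K)
    (φ : V → ℝ) (hφ : ∀ a, 0 ≤ φ a ∧ φ a ≤ 1) :
    |∑ a, φ a * c a| ≤ K := by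
  classical
  rw [abs_le]
  constructor
  · have h1 := abs_le.mp (h (univ.filter (fun a => c a < 0)))
    have l1 : ∑ a ∈ univ.filter (fun a => c a < 0), c a
        ≤ ∑ a ∈ univ.filter (fun a => c a < 0), φ a * c a := by
      apply Finset.sum_le_sum
      intro a ha
      have hc : c a < 0 := (Finset.mem_filter.mp ha).2
      have := mul_le_mul_of_nonpos_right (hφ a).2 hc.le
      simpa using this
    have l2 : (0:ℝ) ≤ ∑ a ∈ univ.filter (fun a => ¬ c a < 0), φ a * c a := by
      apply Finset.sum_nonneg
      intro a ha
      exact mul_nonneg (hφ a).1 (not_lt.mp (Finset.mem_filter.mp ha).2)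
    have l3 := Finset.sum_filter_add_sum_filter_not univ (fun a => c a < 0) (fun a => φ a * c a)
    linarith
  · have h1 := abs_le.mp (h (univ.filter (fun a => 0 ≤ c a)))
    have l1 : ∑ a ∈ univ.filter (fun a => 0 ≤ c a), φ a * c a
        ≤ ∑ a ∈ univ.filter (fun a => 0 ≤ c a), c a := by
      apply Finset.sum_le_sum
      intro a ha
      exact mul_le_of_le_one_left (Finset.mem_filter.mp ha).2 (hφ a).2
    have l2 : ∑ a ∈ univ.filter (fun a => ¬ 0 ≤ c a), φ a * c a ≤ 0 := by
      apply Finset.sum_nonpos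
      intro a ha
      exact mul_nonpos_iff.mpr (Or.inl ⟨(hφ a).1, (not_le.mp (Finset.mem_filter.mp ha).2).le⟩)
    have l3 := Finset.sum_filter_add_sum_filter_not univ (fun a => 0 ≤ c a) (fun a => φ a * c a)
    linarith

end Aux

section DDsec
variable {V : Type} [Fintype V] [DecidableEq V]

noncomputable def DD (G : SimpleGraph V) (p : ℝ) (X Y : Finset V) : ℝ :=
  ∑ a, ∑ b, indiR X a * indiR Y b * (adjiR G a b - p)

lemma DD_symm (G : SimpleGraph V) (p : ℝ) (X Y : Finset V) : DD G p X Y = DD G p Y X := by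
  unfold DD
  rw [Finset.sum_comm]
  refine Finset.sum_congr rfl fun b _ => Finset.sum_congr rfl fun a _ => ?_
  rw [adjiR_symm]; ring

lemma DD_eq_restrict (G : SimpleGraph V) (p : ℝ) (X Y : Finset V) :
    DD G p X Y = ∑ a ∈ X, ∑ b ∈ Y, (adjiR G a b - p) := by
  unfold DD
  calc ∑ a, ∑ b, indiR X a * indiR Y b * (adjiR G a b - p)
      = ∑ a, indiR X a * ∑ b, indiR Y b * (adjiR G a b - p) := by
        refine Finset.sum_congr rfl fun a _ => ?_
        rw [Finset.mul_sum]
        exact Finset.sum_congr rfl fun b _ => by ring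
    _ = ∑ a ∈ X, ∑ b, indiR Y b * (adjiR G a b - p) := sum_indiR_mul _ _
    _ = ∑ a ∈ X, ∑ b ∈ Y, (adjiR G a b - p) :=
        Finset.sum_congr rfl fun a _ => sum_indiR_mul _ _

lemma DD_bound (G : SimpleGraph V) (p γ : ℝ) (n : ℕ)
    (hset : ∀ X : Finset V, |DD G p X X| ≤ γ * (n:ℝ)^2) (X Y : Finset V) :
    |DD G p X Y| ≤ 2 * (γ * (n:ℝ)^2) := by
  have hsym := DD_symm G p X Y
  have hid : DD G p (X ∪ Y) (X ∪ Y) + DD G p (X ∩ Y) (X ∩ Y)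
      = DD G p X Y + DD G p Y X + DD G p (X \ Y) (X \ Y) + DD G p (Y \ X) (Y \ X) := by
    unfold DD
    simp only [← Finset.sum_add_distrib]
    refine Finset.sum_congr rfl fun a _ => Finset.sum_congr rfl fun b _ => ?_
    by_cases h1 : a ∈ X <;> by_cases h2 : a ∈ Y <;> by_cases h3 : b ∈ X <;> by_cases h4 : b ∈ Y <;>
      simp [indiR, h1, h2, h3, h4, Finset.mem_union, Finset.mem_inter, Finset.mem_sdiff] <;> ring
  have b1 := abs_le.mp (hset (X ∪ Y))
  have b2 := abs_le.mp (hset (X ∩ Y))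
  have b3 := abs_le.mp (hset (X \ Y))
  have b4 := abs_le.mp (hset (Y \ X))
  exact abs_le.mpr ⟨by linarith, by linarith⟩

lemma funDISC (G : SimpleGraph V) (p γ : ℝ) (n : ℕ)
    (hset : ∀ X : Finset V, |DD G p X X| ≤ γ * (n:ℝ)^2)
    (φ ψ : V → ℝ) (hφ : ∀ a, 0 ≤ φ a ∧ φ a ≤ 1) (hψ : ∀ a, 0 ≤ ψ a ∧ ψ a ≤ 1) :
    |∑ a, ∑ b, φ a * ψ b * (adjiR G a b - p)| ≤ 2 * (γ * (n:ℝ)^2) := by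
  have hXY : ∀ X Y : Finset V, |∑ a ∈ X, ∑ b ∈ Y, (adjiR G a b - p)| ≤ 2 * (γ * (n:ℝ)^2) := by
    intro X Y
    rw [← DD_eq_restrict]
    exact DD_bound G p γ n hset X Y
  have inner : ∀ X : Finset V, |∑ a ∈ X, ∑ b, ψ b * (adjiR G a b - p)| ≤ 2 * (γ * (n:ℝ)^2) := by
    intro X
    have hswap : ∑ a ∈ X, ∑ b, ψ b * (adjiR G a b - p)
        = ∑ b, ψ b * (∑ a ∈ X, (adjiR G a b - p)) := by
      rw [Finset.sum_comm]
      exact Finset.sum_congr rfl fun b _ => (Finset.mul_sum _ _ _).symm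
    rw [hswap]
    refine box_helper _ _ ?_ ψ hψ
    intro Y
    have h : ∑ b ∈ Y, ∑ a ∈ X, (adjiR G a b - p) = ∑ a ∈ X, ∑ b ∈ Y, (adjiR G a b - p) :=
      Finset.sum_comm
    rw [h]; exact hXY X Y
  have h : ∑ a, ∑ b, φ a * ψ b * (adjiR G a b - p)
      = ∑ a, φ a * (∑ b, ψ b * (adjiR G a b - p)) := by
    refine Finset.sum_congr rfl fun a _ => ?_
    rw [Finset.mul_sum]
    exact Finset.sum_congr rfl fun b _ => by ring
  rw [h]
  exact box_helper _ _ inner φ hφ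

end DDsec
section Split

def YY (V : Type) {r : ℕ} (i j : Fin r) (w : {k : Fin r // k ≠ i ∧ k ≠ j} → V)
    (a b : V) : Fin r → V :=
  fun k => if h1 : k = i then a else if h2 : k = j then b else w ⟨k, h1, h2⟩

lemma YY_apply_i {V : Type} {r : ℕ} (i j : Fin r) (w : {k : Fin r // k ≠ i ∧ k ≠ j} → V)
    (a b : V) : YY V i j w a b i = a := by simp [YY]

lemma YY_apply_j {V : Type} {r : ℕ} (i j : Fin r) (hji : j ≠ i)
    (w : {k : Fin r // k ≠ i ∧ k ≠ j} → V) (a b : V) : YY V i j w a b j = b := by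
  simp [YY, hji]

lemma YY_apply_other {V : Type} {r : ℕ} (i j : Fin r) (w : {k : Fin r // k ≠ i ∧ k ≠ j} → V)
    (a b : V) {k : Fin r} (h1 : k ≠ i) (h2 : k ≠ j) : YY V i j w a b k = w ⟨k, h1, h2⟩ := by
  simp [YY, h1, h2]

def splitEquiv (V : Type) {r : ℕ} (i j : Fin r) (hij : i ≠ j) :
    (({k : Fin r // k ≠ i ∧ k ≠ j} → V) × V × V) ≃ (Fin r → V) where
  toFun t := YY V i j t.1 t.2.1 t.2.2
  invFun x := (fun k => x k.1, x i, x j)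
  left_inv := by
    rintro ⟨w, a, b⟩
    simp only [Prod.mk.injEq]
    refine ⟨?_, ?_, ?_⟩
    · funext k
      rcases k with ⟨k, h1, h2⟩
      exact YY_apply_other i j w a b h1 h2
    · exact YY_apply_i i j w a b
    · exact YY_apply_j i j (Ne.symm hij) w a b
  right_inv := by
    intro x
    funext k
    by_cases h1 : k = i
    · subst h1; simp [YY]
    · by_cases h2 : k = j
      · subst h2; simp [YY, h1]
      · simp [YY, h1, h2]

lemma sum_YY {V : Type} [Fintype V] {r : ℕ} (i j : Fin r) (hij : i ≠ j)
    (g : (Fin r → V) → ℝ) :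
    ∑ x : Fin r → V, g x
      = ∑ w : {k : Fin r // k ≠ i ∧ k ≠ j} → V, ∑ a : V, ∑ b : V, g (YY V i j w a b) := by
  rw [← Equiv.sum_comp (splitEquiv V i j hij) g, Fintype.sum_prod_type]
  exact Finset.sum_congr rfl fun w _ => by rw [Fintype.sum_prod_type]; rfl

lemma card_YY (V : Type) [Fintype V] {r : ℕ} (i j : Fin r) (hij : i ≠ j) :
    Fintype.card ({k : Fin r // k ≠ i ∧ k ≠ j} → V) * (Fintype.card V * Fintype.card V)
      = Fintype.card V ^ r := by
  classical
  have h := Fintype.card_congr (splitEquiv V i j hij)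
  simpa [Fintype.card_prod, Fintype.card_fun] using h

open Finset in
open Classical in
noncomputable def FF (V : Type) [Fintype V] [DecidableEq V] (G : SimpleGraph V) (r : ℕ) (S : Finset V)
    (E : Finset (Fin r × Fin r)) : ℝ :=
  ∑ x : Fin r → V, (∏ k, indiR S (x k)) * ∏ e ∈ E, adjiR G (x e.1) (x e.2)

end Split
section Inner
open Finset
variable {V : Type} [Fintype V] [DecidableEq V]

lemma inner_bound [Nonempty V] (G : SimpleGraph V) (p γ : ℝ) (n : ℕ)
    (hfun : ∀ φ ψ : V → ℝ, (∀ a, 0 ≤ φ a ∧ φ a ≤ 1) → (∀ a, 0 ≤ ψ a ∧ ψ a ≤ 1) →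
        |∑ a, ∑ b, φ a * ψ b * (adjiR G a b - p)| ≤ 2 * (γ * (n:ℝ)^2))
    {r : ℕ} (S : Finset V) (i j : Fin r) (hij : i < j) (E : Finset (Fin r × Fin r))
    (hE : ∀ e ∈ E, e.1 < e.2) (hq : (i, j) ∉ E)
    (w : {k : Fin r // k ≠ i ∧ k ≠ j} → V) :
    |∑ a : V, ∑ b : V, (∏ k, indiR S (YY V i j w a b k)) *
        ((adjiR G a b - p) * ∏ e ∈ E, adjiR G (YY V i j w a b e.1) (YY V i j w a b e.2))|
      ≤ 2 * (γ * (n:ℝ)^2) := by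
  classical
  obtain ⟨v₀⟩ := ‹Nonempty V›
  have hji : j ≠ i := hij.ne'
  set xw : Fin r → V := YY V i j w v₀ v₀ with hxwdef
  set F1 : V → ℝ := fun a =>
      indiR S a * ∏ e ∈ E.filter (fun e => e.1 = i ∨ e.2 = i),
        adjiR G (if e.1 = i then a else xw e.1) (if e.2 = i then a else xw e.2) with hF1
  set K : ℝ := (∏ k ∈ (univ.erase i).erase j, indiR S (xw k)) *
      ∏ e ∈ (E.filter (fun e => ¬(e.1 = i ∨ e.2 = i))).filter (fun e => ¬(e.1 = j ∨ e.2 = j)),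
        adjiR G (xw e.1) (xw e.2) with hK
  set F2 : V → ℝ := fun b =>
      K * (indiR S b *
        ∏ e ∈ (E.filter (fun e => ¬(e.1 = i ∨ e.2 = i))).filter (fun e => e.1 = j ∨ e.2 = j),
          adjiR G (if e.1 = j then b else xw e.1) (if e.2 = j then b else xw e.2)) with hF2
  have hbox1 : ∀ a, 0 ≤ F1 a ∧ F1 a ≤ 1 := by
    intro a
    rw [hF1]
    exact box_mul (indiR_box S a) (box_prod _ _ (fun e _ => adjiR_box G _ _))
  have hboxK : 0 ≤ K ∧ K ≤ 1 := by
    rw [hK]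
    exact box_mul (box_prod _ _ (fun k _ => indiR_box S _))
      (box_prod _ _ (fun e _ => adjiR_box G _ _))
  have hbox2 : ∀ b, 0 ≤ F2 b ∧ F2 b ≤ 1 := by
    intro b
    rw [hF2]
    exact box_mul hboxK (box_mul (indiR_box S b) (box_prod _ _ (fun e _ => adjiR_box G _ _)))
  have heq : ∀ a b : V,
      (∏ k, indiR S (YY V i j w a b k)) *
        ((adjiR G a b - p) * ∏ e ∈ E, adjiR G (YY V i j w a b e.1) (YY V i j w a b e.2))
      = F1 a * F2 b * (adjiR G a b - p) := by
    intro a b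
    have hA : (∏ k, indiR S (YY V i j w a b k))
        = indiR S a * indiR S b * ∏ k ∈ (univ.erase i).erase j, indiR S (xw k) := by
      rw [← Finset.mul_prod_erase (univ : Finset (Fin r)) _ (Finset.mem_univ i),
          ← Finset.mul_prod_erase (univ.erase i) _
            (Finset.mem_erase.mpr ⟨hji, Finset.mem_univ j⟩)]
      rw [YY_apply_i, YY_apply_j i j hji]
      have hrest : ∏ k ∈ (univ.erase i).erase j, indiR S (YY V i j w a b k)
          = ∏ k ∈ (univ.erase i).erase j, indiR S (xw k) := by
        refine Finset.prod_congr rfl fun k hk => ?_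
        obtain ⟨hkj, hk'⟩ := Finset.mem_erase.mp hk
        obtain ⟨hki, _⟩ := Finset.mem_erase.mp hk'
        rw [hxwdef, YY_apply_other i j w a b hki hkj, YY_apply_other i j w v₀ v₀ hki hkj]
      rw [hrest]; ring
    have hB : (∏ e ∈ E, adjiR G (YY V i j w a b e.1) (YY V i j w a b e.2))
        = (∏ e ∈ E.filter (fun e => e.1 = i ∨ e.2 = i),
            adjiR G (if e.1 = i then a else xw e.1) (if e.2 = i then a else xw e.2)) *
          ((∏ e ∈ (E.filter (fun e => ¬(e.1 = i ∨ e.2 = i))).filter (fun e => e.1 = j ∨ e.2 = j),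
            adjiR G (if e.1 = j then b else xw e.1) (if e.2 = j then b else xw e.2)) *
           ∏ e ∈ (E.filter (fun e => ¬(e.1 = i ∨ e.2 = i))).filter (fun e => ¬(e.1 = j ∨ e.2 = j)),
            adjiR G (xw e.1) (xw e.2)) := by
      rw [← Finset.prod_filter_mul_prod_filter_not E (fun e => e.1 = i ∨ e.2 = i)
            (fun e => adjiR G (YY V i j w a b e.1) (YY V i j w a b e.2)),
          ← Finset.prod_filter_mul_prod_filter_not
            (E.filter (fun e => ¬(e.1 = i ∨ e.2 = i))) (fun e => e.1 = j ∨ e.2 = j)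
            (fun e => adjiR G (YY V i j w a b e.1) (YY V i j w a b e.2))]
      congr 1
      · refine Finset.prod_congr rfl fun e he => ?_
        obtain ⟨heE, hPi⟩ := Finset.mem_filter.mp he
        have hlt := hE e heE
        rcases hPi with h1 | h2
        · have h2i : e.2 ≠ i := by rw [h1] at hlt; exact hlt.ne'
          have h2j : e.2 ≠ j := by
            intro h
            exact hq (by rw [← Prod.eta e, h1, h] at heE; exact heE)
          rw [if_pos h1, if_neg h2i,
            show YY V i j w a b e.1 = a from by rw [h1]; exact YY_apply_i i j w a b,
            show YY V i j w a b e.2 = xw e.2 from by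
              rw [hxwdef, YY_apply_other i j w a b h2i h2j, YY_apply_other i j w v₀ v₀ h2i h2j]]
        · have h1i : e.1 ≠ i := by rw [h2] at hlt; exact hlt.ne
          have h1j : e.1 ≠ j := by
            have : e.1 < j := lt_trans (h2 ▸ hlt) hij
            exact this.ne
          rw [if_neg h1i, if_pos h2,
            show YY V i j w a b e.1 = xw e.1 from by
              rw [hxwdef, YY_apply_other i j w a b h1i h1j, YY_apply_other i j w v₀ v₀ h1i h1j],
            show YY V i j w a b e.2 = a from by rw [h2]; exact YY_apply_i i j w a b]
      congr 1
      · refine Finset.prod_congr rfl fun e he => ?_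
        obtain ⟨he', hPj⟩ := Finset.mem_filter.mp he
        obtain ⟨heE, hnPi⟩ := Finset.mem_filter.mp he'
        push_neg at hnPi
        obtain ⟨h1i, h2i⟩ := hnPi
        have hlt := hE e heE
        rcases hPj with h1 | h2
        · have h2j : e.2 ≠ j := by rw [h1] at hlt; exact hlt.ne'
          rw [if_pos h1, if_neg h2j,
            show YY V i j w a b e.1 = b from by rw [h1]; exact YY_apply_j i j hji w a b,
            show YY V i j w a b e.2 = xw e.2 from by
              rw [hxwdef, YY_apply_other i j w a b h2i h2j, YY_apply_other i j w v₀ v₀ h2i h2j]]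
        · have h1j : e.1 ≠ j := by rw [h2] at hlt; exact hlt.ne
          rw [if_neg h1j, if_pos h2,
            show YY V i j w a b e.1 = xw e.1 from by
              rw [hxwdef, YY_apply_other i j w a b h1i h1j, YY_apply_other i j w v₀ v₀ h1i h1j],
            show YY V i j w a b e.2 = b from by rw [h2]; exact YY_apply_j i j hji w a b]
      · refine Finset.prod_congr rfl fun e he => ?_
        obtain ⟨he', hPj⟩ := Finset.mem_filter.mp he
        obtain ⟨heE, hnPi⟩ := Finset.mem_filter.mp he'
        push_neg at hnPi
        push_neg at hPj
        obtain ⟨h1i, h2i⟩ := hnPi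
        obtain ⟨h1j, h2j⟩ := hPj
        rw [show YY V i j w a b e.1 = xw e.1 from by
              rw [hxwdef, YY_apply_other i j w a b h1i h1j, YY_apply_other i j w v₀ v₀ h1i h1j],
            show YY V i j w a b e.2 = xw e.2 from by
              rw [hxwdef, YY_apply_other i j w a b h2i h2j, YY_apply_other i j w v₀ v₀ h2i h2j]]
    rw [hA, hB, hF1, hF2, hK]
    ring
  calc |∑ a : V, ∑ b : V, (∏ k, indiR S (YY V i j w a b k)) *
        ((adjiR G a b - p) * ∏ e ∈ E, adjiR G (YY V i j w a b e.1) (YY V i j w a b e.2))|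
      = |∑ a : V, ∑ b : V, F1 a * F2 b * (adjiR G a b - p)| := by
        congr 1
        exact Finset.sum_congr rfl fun a _ => Finset.sum_congr rfl fun b _ => heq a b
    _ ≤ 2 * (γ * (n:ℝ)^2) := hfun F1 F2 hbox1 hbox2

end Inner
section Key
open Finset

lemma counting_key (V : Type) [Fintype V] [DecidableEq V] [Nonempty V] (G : SimpleGraph V)
    (p γ : ℝ) (hp0 : 0 ≤ p) (hp1 : p ≤ 1) (hγ : 0 ≤ γ) (n : ℕ) (hn : n = Fintype.card V)
    (hfun : ∀ φ ψ : V → ℝ, (∀ a, 0 ≤ φ a ∧ φ a ≤ 1) → (∀ a, 0 ≤ ψ a ∧ ψ a ≤ 1) →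
        |∑ a, ∑ b, φ a * ψ b * (adjiR G a b - p)| ≤ 2 * (γ * (n:ℝ)^2))
    (r : ℕ) (S : Finset V) (E : Finset (Fin r × Fin r)) (hE : ∀ e ∈ E, e.1 < e.2) :
    |FF V G r S E - p ^ E.card * (S.card : ℝ) ^ r| ≤ 2 * E.card * γ * (n:ℝ) ^ r := by
  classical
  revert hE
  induction E using Finset.induction_on with
  | empty =>
    intro _
    have h0 : FF V G r S ∅ = (S.card : ℝ) ^ r := by
      unfold FF
      simp only [Finset.prod_empty, mul_one]
      rw [← sum_indiR S, Fintype.sum_pow]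
    simp [h0]
  | @insert q E' hq ih =>
    intro hE
    obtain ⟨i, j⟩ := q
    have hij : i < j := hE (i, j) (Finset.mem_insert_self _ _)
    have hsub : ∀ e ∈ E', e.1 < e.2 := fun e he => hE e (Finset.mem_insert_of_mem he)
    have IH := ih hsub
    have hΔ : |FF V G r S (insert (i, j) E') - p * FF V G r S E'| ≤ 2 * γ * (n:ℝ) ^ r := by
      have hrw : FF V G r S (insert (i, j) E') - p * FF V G r S E'
          = ∑ x : Fin r → V, (∏ k, indiR S (x k)) *
              ((adjiR G (x i) (x j) - p) * ∏ e ∈ E', adjiR G (x e.1) (x e.2)) := by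
        unfold FF
        rw [Finset.mul_sum, ← Finset.sum_sub_distrib]
        refine Finset.sum_congr rfl fun x _ => ?_
        rw [Finset.prod_insert hq]
        ring
      rw [hrw, sum_YY i j hij.ne]
      have hw : ∀ w : {k : Fin r // k ≠ i ∧ k ≠ j} → V,
          |∑ a : V, ∑ b : V, (∏ k, indiR S (YY V i j w a b k)) *
              ((adjiR G (YY V i j w a b i) (YY V i j w a b j) - p) *
                ∏ e ∈ E', adjiR G (YY V i j w a b e.1) (YY V i j w a b e.2))|
            ≤ 2 * (γ * (n:ℝ)^2) := by
        intro w
        have hshape : ∀ a b : V,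
            (∏ k, indiR S (YY V i j w a b k)) *
              ((adjiR G (YY V i j w a b i) (YY V i j w a b j) - p) *
                ∏ e ∈ E', adjiR G (YY V i j w a b e.1) (YY V i j w a b e.2))
            = (∏ k, indiR S (YY V i j w a b k)) *
              ((adjiR G a b - p) *
                ∏ e ∈ E', adjiR G (YY V i j w a b e.1) (YY V i j w a b e.2)) := by
          intro a b
          rw [YY_apply_i, YY_apply_j i j hij.ne']
        calc |∑ a : V, ∑ b : V, (∏ k, indiR S (YY V i j w a b k)) *
              ((adjiR G (YY V i j w a b i) (YY V i j w a b j) - p) *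
                ∏ e ∈ E', adjiR G (YY V i j w a b e.1) (YY V i j w a b e.2))|
            = |∑ a : V, ∑ b : V, (∏ k, indiR S (YY V i j w a b k)) *
              ((adjiR G a b - p) *
                ∏ e ∈ E', adjiR G (YY V i j w a b e.1) (YY V i j w a b e.2))| := by
              congr 1
              exact Finset.sum_congr rfl fun a _ => Finset.sum_congr rfl fun b _ => hshape a b
          _ ≤ 2 * (γ * (n:ℝ)^2) := inner_bound G p γ n hfun S i j hij E' hsub hq w
      calc |∑ w : {k : Fin r // k ≠ i ∧ k ≠ j} → V, ∑ a : V, ∑ b : V,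
              (∏ k, indiR S (YY V i j w a b k)) *
              ((adjiR G (YY V i j w a b i) (YY V i j w a b j) - p) *
                ∏ e ∈ E', adjiR G (YY V i j w a b e.1) (YY V i j w a b e.2))|
          ≤ ∑ w : {k : Fin r // k ≠ i ∧ k ≠ j} → V, |∑ a : V, ∑ b : V,
              (∏ k, indiR S (YY V i j w a b k)) *
              ((adjiR G (YY V i j w a b i) (YY V i j w a b j) - p) *
                ∏ e ∈ E', adjiR G (YY V i j w a b e.1) (YY V i j w a b e.2))| :=
            Finset.abs_sum_le_sum_abs _ _
        _ ≤ ∑ _w : {k : Fin r // k ≠ i ∧ k ≠ j} → V, 2 * (γ * (n:ℝ)^2) :=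
            Finset.sum_le_sum fun w _ => hw w
        _ = (Fintype.card ({k : Fin r // k ≠ i ∧ k ≠ j} → V) : ℝ) * (2 * (γ * (n:ℝ)^2)) := by
            rw [Finset.sum_const, nsmul_eq_mul, Finset.card_univ]
        _ = 2 * γ * (n:ℝ) ^ r := by
            have hc := card_YY V i j hij.ne
            rw [← hn] at hc
            have hcR : (Fintype.card ({k : Fin r // k ≠ i ∧ k ≠ j} → V) : ℝ) * ((n:ℝ) * n)
                = (n:ℝ) ^ r := by exact_mod_cast congrArg (Nat.cast (R := ℝ)) hc
            nlinarith [hcR]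
    have hins : (insert (i, j) E').card = E'.card + 1 := Finset.card_insert_of_notMem hq
    rw [hins]
    have tri := abs_sub_le (FF V G r S (insert (i, j) E')) (p * FF V G r S E')
      (p ^ (E'.card + 1) * (S.card : ℝ) ^ r)
    have habs2 : |p * FF V G r S E' - p ^ (E'.card + 1) * (S.card : ℝ) ^ r|
        = p * |FF V G r S E' - p ^ E'.card * (S.card : ℝ) ^ r| := by
      rw [show p * FF V G r S E' - p ^ (E'.card + 1) * (S.card : ℝ) ^ r
          = p * (FF V G r S E' - p ^ E'.card * (S.card : ℝ) ^ r) from by ring,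
        abs_mul, abs_of_nonneg hp0]
    rw [habs2] at tri
    have hmul : p * |FF V G r S E' - p ^ E'.card * (S.card : ℝ) ^ r|
        ≤ 2 * E'.card * γ * (n:ℝ) ^ r :=
      le_trans (mul_le_of_le_one_left (abs_nonneg _) hp1) IH
    push_cast
    push_cast at IH hmul
    linarith [tri, hΔ, hmul]

end Key
section Final
open Finset

lemma card_ltPairs (r : ℕ) :
    (univ.filter (fun e : Fin r × Fin r => e.1 < e.2)).card = r.choose 2 := by
  classical
  have hswap : (univ.filter (fun e : Fin r × Fin r => e.1 < e.2)).card
      = (univ.filter (fun e : Fin r × Fin r => e.2 < e.1)).card := by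
    apply Finset.card_bij (fun e _ => (e.2, e.1))
    · intro e he
      simp only [Finset.mem_filter, Finset.mem_univ, true_and] at he ⊢
      exact he
    · intro e1 h1 e2 h2 h
      obtain ⟨ha, hb⟩ := Prod.ext_iff.mp h
      exact Prod.ext_iff.mpr ⟨hb, ha⟩
    · intro e he
      simp only [Finset.mem_filter, Finset.mem_univ, true_and] at he
      exact ⟨(e.2, e.1), by simp [he], by simp⟩
  have hdisj : Disjoint (univ.filter (fun e : Fin r × Fin r => e.1 < e.2))
      (univ.filter (fun e : Fin r × Fin r => e.2 < e.1)) := by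
    rw [Finset.disjoint_left]
    intro e h1 h2
    simp only [Finset.mem_filter] at h1 h2
    exact absurd h2.2 (lt_asymm h1.2)
  have hunion : (univ.filter (fun e : Fin r × Fin r => e.1 < e.2))
      ∪ (univ.filter (fun e : Fin r × Fin r => e.2 < e.1))
      = (univ : Finset (Fin r)).offDiag := by
    ext e
    simp only [Finset.mem_union, Finset.mem_filter, Finset.mem_univ, true_and,
      Finset.mem_offDiag]
    constructor
    · rintro (h | h)
      · exact fun hc => absurd hc h.ne
      · exact fun hc => absurd hc h.ne'
    · intro h
      exact lt_or_gt_of_ne h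
  have hcard : (univ.filter (fun e : Fin r × Fin r => e.1 < e.2)).card
      + (univ.filter (fun e : Fin r × Fin r => e.2 < e.1)).card = r * r - r := by
    rw [← Finset.card_union_of_disjoint hdisj, hunion, Finset.offDiag_card,
      Finset.card_univ, Fintype.card_fin]
  rw [Nat.choose_two_right]
  have hrr : r * (r - 1) = r * r - r := by
    cases r with
    | zero => simp
    | succ k =>
      rw [Nat.succ_sub_one, Nat.mul_succ, Nat.add_sub_cancel]
  rw [hrr]
  omega

lemma FF_eq_card (V : Type) [Fintype V] [DecidableEq V] (G : SimpleGraph V) (r : ℕ)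
    (S : Finset V) :
    FF V G r S (univ.filter (fun e : Fin r × Fin r => e.1 < e.2))
      = (Nat.card {f : Fin r → V // Function.Injective f ∧ (∀ i, f i ∈ S) ∧
          ∀ i j, i ≠ j → G.Adj (f i) (f j)} : ℝ) := by
  classical
  rw [Nat.card_eq_fintype_card, Fintype.card_subtype, Finset.card_filter]
  push_cast
  unfold FF
  refine Finset.sum_congr rfl fun x _ => ?_
  unfold indiR adjiR
  rw [Finset.prod_boole, Finset.prod_boole]
  by_cases h1 : ∀ k ∈ (univ : Finset (Fin r)), x k ∈ S
  · by_cases h2 : ∀ e ∈ univ.filter (fun e : Fin r × Fin r => e.1 < e.2), G.Adj (x e.1) (x e.2)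
    · have hadj : ∀ i j : Fin r, i ≠ j → G.Adj (x i) (x j) := by
        intro i j hne
        rcases lt_or_gt_of_ne hne with hlt | hgt
        · exact h2 (i, j) (by simp [hlt])
        · exact (h2 (j, i) (by simp [hgt])).symm
      have hQ : Function.Injective x ∧ (∀ i, x i ∈ S) ∧
          ∀ i j, i ≠ j → G.Adj (x i) (x j) := by
        refine ⟨?_, fun i => h1 i (Finset.mem_univ i), hadj⟩
        intro a b hab
        by_contra hne
        exact (G.ne_of_adj (hadj a b hne)) hab
      rw [if_pos h1, if_pos h2, if_pos hQ]
      norm_num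
    · have hQ : ¬(Function.Injective x ∧ (∀ i, x i ∈ S) ∧
          ∀ i j, i ≠ j → G.Adj (x i) (x j)) := by
        rintro ⟨-, -, hadj⟩
        apply h2
        intro e he
        have := (Finset.mem_filter.mp he).2
        exact hadj e.1 e.2 this.ne
      rw [if_neg h2, if_neg hQ]
      ring
  · have hQ : ¬(Function.Injective x ∧ (∀ i, x i ∈ S) ∧
        ∀ i j, i ≠ j → G.Adj (x i) (x j)) := by
      rintro ⟨-, hmem, -⟩
      exact h1 fun k _ => hmem k
    rw [if_neg h1, if_neg hQ]
    ring

lemma DD_self_eq (V : Type) [Fintype V] [DecidableEq V] (G : SimpleGraph V) (p : ℝ)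
    (X : Finset V) :
    DD G p X X = (Nat.card {e : V × V // e.1 ∈ X ∧ e.2 ∈ X ∧ G.Adj e.1 e.2} : ℝ)
      - p * (X.card : ℝ) ^ 2 := by
  classical
  rw [Nat.card_eq_fintype_card, Fintype.card_subtype, Finset.card_filter]
  push_cast
  rw [Fintype.sum_prod_type]
  have h1 : ∀ a b : V, indiR X a * indiR X b * (adjiR G a b - p)
      = (if a ∈ X ∧ b ∈ X ∧ G.Adj a b then (1:ℝ) else 0) - p * (indiR X a * indiR X b) := by
    intro a b
    by_cases ha : a ∈ X <;> by_cases hb : b ∈ X <;> by_cases hc : G.Adj a b <;>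
      simp [indiR, adjiR, ha, hb, hc] <;> ring
  have h2 : DD G p X X
      = (∑ a, ∑ b, if a ∈ X ∧ b ∈ X ∧ G.Adj a b then (1:ℝ) else 0)
        - p * ∑ a, ∑ b, indiR X a * indiR X b := by
    unfold DD
    rw [Finset.mul_sum, ← Finset.sum_sub_distrib]
    refine Finset.sum_congr rfl fun a _ => ?_
    rw [Finset.mul_sum, ← Finset.sum_sub_distrib]
    exact Finset.sum_congr rfl fun b _ => h1 a b
  have h3 : ∑ a, ∑ b, indiR X a * indiR X b = (X.card : ℝ) ^ 2 := by
    rw [← Finset.sum_mul_sum]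
    rw [sum_indiR]
    ring
  rw [h2, h3]

end Final

theorem stmt_6 (r : ℕ) (hr : 2 ≤ r) :
    ∃ C : ℝ, 0 ≤ C ∧
      ∀ (V : Type) [Fintype V] (G : SimpleGraph V),
        ∀ (p γ : ℝ), 0 < p → p < 1 →
        ∀ n : ℕ, n = Fintype.card V →
        (∀ S : Finset V,
          |(Nat.card {e : V × V // e.1 ∈ S ∧ e.2 ∈ S ∧ G.Adj e.1 e.2} : ℝ)
              - p * (S.card : ℝ) ^ 2| ≤ γ * n ^ 2) →
        ∀ S : Finset V,
          |(Nat.card {f : Fin r → V // Function.Injective f ∧ (∀ i, f i ∈ S) ∧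
              ∀ i j, i ≠ j → G.Adj (f i) (f j)} : ℝ)
            - p ^ (r.choose 2) * (S.card : ℝ) ^ r|
          ≤ r ^ 2 * γ * n ^ r + C * n ^ (r - 1) := by
  classical
  refine ⟨0, le_refl 0, ?_⟩
  intro V _ G p γ hp0 hp1 n hn hyp S
  rcases isEmpty_or_nonempty V with hV | hV
  · have hn0 : n = 0 := by rw [hn]; exact Fintype.card_eq_zero
    haveI : IsEmpty {f : Fin r → V // Function.Injective f ∧ (∀ i, f i ∈ S) ∧
        ∀ i j, i ≠ j → G.Adj (f i) (f j)} :=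
      ⟨fun s => IsEmpty.false (s.1 ⟨0, lt_of_lt_of_le (by norm_num) hr⟩)⟩
    have hcard0 : Nat.card {f : Fin r → V // Function.Injective f ∧ (∀ i, f i ∈ S) ∧
        ∀ i j, i ≠ j → G.Adj (f i) (f j)} = 0 := Nat.card_of_isEmpty
    have hS0 : S.card = 0 := by
      rw [Finset.card_eq_zero]
      exact Finset.eq_empty_of_forall_notMem fun x => (IsEmpty.false x).elim
    have e1 : ((0:ℝ)) ^ r = 0 := zero_pow (Nat.one_le_iff_ne_zero.mp (le_trans one_le_two hr))
    have e2 : ((0:ℝ)) ^ (r - 1) = 0 := zero_pow (Nat.sub_ne_zero_of_lt (lt_of_lt_of_le one_lt_two hr))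
    rw [hcard0, hS0, hn0]
    push_cast
    rw [e1, e2]
    simp
  · have hn_pos : 0 < n := by rw [hn]; exact Fintype.card_pos
    have hn2 : (0:ℝ) < (n:ℝ) ^ 2 := by positivity
    have hγ : 0 ≤ γ := by
      have h0 := hyp ∅
      haveI : IsEmpty {e : V × V // e.1 ∈ (∅ : Finset V) ∧ e.2 ∈ (∅ : Finset V)
          ∧ G.Adj e.1 e.2} := ⟨fun s => by simpa using s.2.1⟩
      rw [Nat.card_of_isEmpty] at h0
      simp only [Finset.card_empty, Nat.cast_zero, Nat.cast_ofNat] at h0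
      have h0' : (0:ℝ) ≤ γ * (n:ℝ)^2 := by
        have : |(0:ℝ) - p * (0:ℝ)^2| = 0 := by norm_num
        calc (0:ℝ) ≤ |(0:ℝ) - p * (0:ℝ)^2| := abs_nonneg _
          _ ≤ γ * (n:ℝ)^2 := h0
      nlinarith [h0', hn2]
    have hset : ∀ X : Finset V, |DD G p X X| ≤ γ * (n:ℝ)^2 := by
      intro X
      rw [DD_self_eq]
      exact hyp X
    have hfun := funDISC G p γ n hset
    have hkey := counting_key V G p γ hp0.le hp1.le hγ n hn hfun r S
      (univ.filter (fun e : Fin r × Fin r => e.1 < e.2))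
      (fun e he => (Finset.mem_filter.mp he).2)
    rw [card_ltPairs, FF_eq_card] at hkey
    have hfin : 2 * ((r.choose 2 : ℕ) : ℝ) ≤ (r:ℝ) ^ 2 := by
      have h1 : 2 * r.choose 2 ≤ r ^ 2 := by
        rw [Nat.choose_two_right]
        have h := Nat.div_mul_le_self (r * (r - 1)) 2
        have h2 : r * (r - 1) ≤ r ^ 2 := by
          calc r * (r - 1) ≤ r * r := Nat.mul_le_mul_left r (Nat.sub_le r 1)
            _ = r ^ 2 := (sq r).symm
        omega
      exact_mod_cast h1
    have hnr : (0:ℝ) ≤ γ * (n:ℝ) ^ r := mul_nonneg hγ (by positivity)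
    have hfinal : 2 * ((r.choose 2 : ℕ) : ℝ) * γ * (n:ℝ) ^ r
        ≤ (r:ℝ) ^ 2 * γ * (n:ℝ) ^ r := by nlinarith [hfin, hnr]
    calc |(Nat.card {f : Fin r → V // Function.Injective f ∧ (∀ i, f i ∈ S) ∧
              ∀ i j, i ≠ j → G.Adj (f i) (f j)} : ℝ)
            - p ^ (r.choose 2) * (S.card : ℝ) ^ r|
        ≤ 2 * ((r.choose 2 : ℕ) : ℝ) * γ * (n:ℝ) ^ r := hkey
      _ ≤ (r:ℝ) ^ 2 * γ * (n:ℝ) ^ r := hfinal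
      _ ≤ (r:ℝ) ^ 2 * γ * (n:ℝ) ^ r + 0 * (n:ℝ) ^ (r-1) := by
          rw [zero_mul, add_zero]
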